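/- P(n,1) = 4·P(n-1,1) + (n-2)·2^{n-2} for all n ≥ 3, where P(n,1) is the number of permutations of {1,...,n} with exactly one valley. -/

import Mathlib

/-- The word of the permutation, as a function `ℕ → ℕ` (junk value `0` outside range). -/
def permWord {n : ℕ} (π : Equiv.Perm (Fin n)) (j : ℕ) : ℕ :=
  if h : j < n then (π ⟨j, h⟩).val else 0

/-- The number of valleys of a permutation: interior positions `j` whose entry is strictly
smaller than both neighbours. -/
def valleyCount {n : ℕ} (π : Equiv.Perm (Fin n)) : ℕ :=
  ((Finset.Ioo 0 (n - 1)).filter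
    (fun j => permWord π j < permWord π (j - 1) ∧ permWord π j < permWord π (j + 1))).card

/-- `P n k`: the number of permutations of `{1,…,n}` with exactly `k` valleys. -/
noncomputable def P (n k : ℕ) : ℕ :=
  Nat.card {π : Equiv.Perm (Fin n) // valleyCount π = k}

namespace OV

def vind (m : ℕ) (w : ℕ → ℕ) (p : ℕ) : ℕ :=
  if 0 < p ∧ p + 1 < m ∧ w p < w (p-1) ∧ w p < w (p+1) then 1 else 0

def wvc (m : ℕ) (w : ℕ → ℕ) : ℕ :=
  ((Finset.Ioo 0 (m-1)).filter (fun p => w p < w (p-1) ∧ w p < w (p+1))).card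

def wins (j M : ℕ) (w : ℕ → ℕ) : ℕ → ℕ :=
  fun i => if i < j then w i else if i = j then M else w (i-1)

def badA (m j : ℕ) (w : ℕ → ℕ) : Prop :=
  j + 2 ≤ m ∧ w j < w (j+1) ∧ (j = 0 ∨ w (j-1) < w j)

def badD (m j : ℕ) (w : ℕ → ℕ) : Prop :=
  2 ≤ j ∧ w (j-1) < w (j-2) ∧ (j = m ∨ w j < w (j-1))

instance (m j : ℕ) (w : ℕ → ℕ) : Decidable (badA m j w) := by unfold badA; infer_instance
instance (m j : ℕ) (w : ℕ → ℕ) : Decidable (badD m j w) := by unfold badD; infer_instance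

lemma wins_lt {j M : ℕ} {w : ℕ → ℕ} {i : ℕ} (h : i < j) : wins j M w i = w i := if_pos h
lemma wins_self {j M : ℕ} {w : ℕ → ℕ} : wins j M w j = M := by simp [wins]
lemma wins_gt {j M : ℕ} {w : ℕ → ℕ} {i : ℕ} (h : j < i) : wins j M w i = w (i-1) := by
  simp only [wins]; rw [if_neg (by omega), if_neg (by omega)]

lemma wvc_eq_sum (m : ℕ) (w : ℕ → ℕ) : wvc m w = ∑ p ∈ Finset.range m, vind m w p := by
  rw [wvc, Finset.card_filter]
  rw [← Finset.sum_subset (s₁ := Finset.Ioo 0 (m-1)) (s₂ := Finset.range m)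
      (h := by intro p hp; simp only [Finset.mem_Ioo] at hp; simp only [Finset.mem_range]; omega)
      (hf := by
        intro p hp hp2
        simp only [Finset.mem_Ioo, not_and_or, not_lt] at hp2
        simp only [vind]
        rw [if_neg]; rintro ⟨h1, h2, _⟩; omega)]
  apply Finset.sum_congr rfl
  intro p hp
  simp only [Finset.mem_Ioo] at hp
  simp only [vind]
  congr 1
  have : p + 1 < m := by omega
  simp [hp.1, this]

lemma badD_ite (m j : ℕ) (w : ℕ → ℕ) : (if badD m j w then 1 else 0 : ℕ) =
    if (2 ≤ j ∧ w (j-1) < w (j-2) ∧ (j = m ∨ w j < w (j-1))) then 1 else 0 :=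
  if_congr Iff.rfl rfl rfl

lemma badA_ite (m j : ℕ) (w : ℕ → ℕ) : (if badA m j w then 1 else 0 : ℕ) =
    if (j + 2 ≤ m ∧ w j < w (j+1) ∧ (j = 0 ∨ w (j-1) < w j)) then 1 else 0 :=
  if_congr Iff.rfl rfl rfl

section
variable {m j M q : ℕ} {w : ℕ → ℕ}

lemma L1 {p : ℕ} (hj : j ≤ m) (hp : p + 1 < j) :
    vind (m+1) (wins j M w) p = vind m w p := by
  unfold vind
  rw [wins_lt (by omega), wins_lt (by omega), wins_lt (by omega)]
  congr 1
  have h1 : p + 1 < m := by omega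
  simp only [eq_iff_iff]
  exact ⟨fun ⟨a, _, c⟩ => ⟨a, h1, c⟩, fun ⟨a, _, c⟩ => ⟨a, by omega, c⟩⟩

lemma L3 (hj : j ≤ m) (hM : ∀ i, i < m → w i < M) :
    vind (m+1) (wins j M w) j = 0 := by
  unfold vind
  rw [if_neg]
  rintro ⟨h0, hb, hl, hr⟩
  rw [wins_self, wins_lt (show j - 1 < j by omega)] at hl
  have := hM (j-1) (by omega)
  omega

lemma L2 (hj : j ≤ m) (h2 : 2 ≤ j) (hM : ∀ i, i < m → w i < M)
    (hd : ∀ i, i + 1 < m → w i ≠ w (i+1)) :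
    vind (m+1) (wins j M w) (j-1) = vind m w (j-1) + (if badD m j w then 1 else 0) := by
  have hjj : j - 1 + 1 = j := by omega
  have hjj2 : j - 1 - 1 = j - 2 := by omega
  unfold vind; rw [badD_ite]
  rw [hjj, hjj2, wins_lt (show j-1 < j by omega), wins_lt (show j-2 < j by omega), wins_self]
  by_cases hdd : w (j-1) < w (j-2)
  · rw [if_pos ⟨by omega, by omega, hdd, hM (j-1) (by omega)⟩]
    by_cases hjm : j = m
    · rw [if_neg (by rintro ⟨-, h, -⟩; omega), if_pos ⟨h2, hdd, Or.inl hjm⟩]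
    · have hne := hd (j-1) (by omega)
      rw [hjj] at hne
      rcases hne.lt_or_gt with h | h
      · rw [if_pos ⟨by omega, by omega, hdd, h⟩,
          if_neg (by rintro ⟨-, -, hc | hc⟩ <;> omega)]
      · rw [if_neg (by rintro ⟨-, -, -, hc⟩; omega), if_pos ⟨h2, hdd, Or.inr h⟩]
  · rw [if_neg (by rintro ⟨-, -, h, -⟩; exact hdd h),
      if_neg (by rintro ⟨-, -, h, -⟩; exact hdd h),
      if_neg (by rintro ⟨-, h, -⟩; exact hdd h)]

lemma L4 (hjm : j < m) (hM : ∀ i, i < m → w i < M)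
    (hd : ∀ i, i + 1 < m → w i ≠ w (i+1)) :
    vind (m+1) (wins j M w) (j+1) = vind m w j + (if badA m j w then 1 else 0) := by
  have h1 : j + 1 - 1 = j := by omega
  have h3 : j + 1 + 1 - 1 = j + 1 := by omega
  have e1 : wins j M w (j+1) = w j := by rw [wins_gt (by omega), h1]
  have e2 : wins j M w (j+1-1) = M := by rw [h1, wins_self]
  have e3 : wins j M w (j+1+1) = w (j+1) := by rw [wins_gt (by omega), h3]
  unfold vind; rw [badA_ite]
  rw [e1, e2, e3]
  by_cases hA : j + 2 ≤ m ∧ w j < w (j+1)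
  · rw [if_pos ⟨by omega, by omega, hM j (by omega), hA.2⟩]
    by_cases hj0 : j = 0
    · subst hj0
      rw [if_neg (by rintro ⟨h, -⟩; omega), if_pos ⟨hA.1, hA.2, Or.inl rfl⟩]
    · have hne := hd (j-1) (by omega)
      have hjj : j - 1 + 1 = j := by omega
      rw [hjj] at hne
      rcases hne.lt_or_gt with h | h
      · rw [if_neg (by rintro ⟨-, -, hc, -⟩; omega), if_pos ⟨hA.1, hA.2, Or.inr h⟩]
      · rw [if_pos ⟨by omega, by omega, h, hA.2⟩,
          if_neg (by rintro ⟨-, -, hc | hc⟩ <;> omega)]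
  · rw [if_neg (by rintro ⟨-, hb, -, hc⟩; exact hA ⟨by omega, hc⟩),
      if_neg (by rintro ⟨-, hb, -, hc⟩; exact hA ⟨by omega, hc⟩),
      if_neg (by rintro ⟨hb, hc, -⟩; exact hA ⟨hb, hc⟩)]

lemma L5 (hq : j < q) (hqm : q < m) :
    vind (m+1) (wins j M w) (q+1) = vind m w q := by
  have h1 : q + 1 - 1 = q := by omega
  have h3 : q + 1 + 1 - 1 = q + 1 := by omega
  have e1 : wins j M w (q+1) = w q := by rw [wins_gt (by omega), h1]
  have e2 : wins j M w (q+1-1) = w (q-1) := by rw [h1, wins_gt hq]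
  have e3 : wins j M w (q+1+1) = w (q+1) := by rw [wins_gt (by omega), h3]
  unfold vind
  rw [e1, e2, e3]
  congr 1
  simp only [eq_iff_iff]
  constructor <;> rintro ⟨h1, h2, h3⟩ <;> exact ⟨by omega, by omega, h3⟩

/-- Key lemma A: effect of inserting a maximum `M` at gap `j` on the valley count. -/
lemma ins_vc (hj : j ≤ m) (hM : ∀ i, i < m → w i < M)
    (hd : ∀ i, i + 1 < m → w i ≠ w (i+1)) :
    wvc (m+1) (wins j M w) =
      wvc m w + ((if badA m j w then 1 else 0) + (if badD m j w then 1 else 0)) := by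
  rw [wvc_eq_sum, wvc_eq_sum]
  simp only [Finset.range_eq_Ico]
  rw [← Finset.sum_Ico_consecutive (fun p => vind (m+1) (wins j M w) p)
        (Nat.zero_le j) (by omega : j ≤ m+1)]
  rw [← Finset.sum_Ico_consecutive (fun p => vind m w p) (Nat.zero_le j) hj]
  have hleft : ∑ p ∈ Finset.Ico 0 j, vind (m+1) (wins j M w) p =
      (∑ p ∈ Finset.Ico 0 j, vind m w p) + (if badD m j w then 1 else 0) := by
    by_cases h2 : 2 ≤ j
    · obtain ⟨k, rfl⟩ : ∃ k, j = k + 1 := ⟨j - 1, by omega⟩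
      rw [Finset.sum_Ico_succ_top (Nat.zero_le k), Finset.sum_Ico_succ_top (Nat.zero_le k)]
      have hL2 := L2 (m := m) (j := k+1) (M := M) (w := w) hj h2 hM hd
      simp only [Nat.add_sub_cancel] at hL2
      rw [Finset.sum_congr rfl (fun p hp => by
        simp only [Finset.mem_Ico] at hp
        exact L1 hj (by omega)), hL2]
      rw [← add_assoc]
    · have hD : ¬ badD m j w := by rintro ⟨h, -⟩; omega
      rw [if_neg hD]
      interval_cases j
      · simp
      · have h01 : Finset.Ico 0 1 = {0} := by decide
        simp only [h01, Finset.sum_singleton, Nat.add_zero]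
        unfold vind
        rw [if_neg (by rintro ⟨h, -⟩; omega), if_neg (by rintro ⟨h, -⟩; omega)]
  have hright : ∑ p ∈ Finset.Ico j (m+1), vind (m+1) (wins j M w) p =
      (∑ p ∈ Finset.Ico j m, vind m w p) + (if badA m j w then 1 else 0) := by
    by_cases hjm : j = m
    · subst hjm
      rw [Finset.sum_Ico_eq_sum_range, Finset.sum_Ico_eq_sum_range]
      simp only [Nat.add_sub_cancel_left, Nat.sub_self, Finset.range_one, Finset.range_zero,
        Finset.sum_singleton, Finset.sum_empty, Nat.add_zero]
      rw [L3 hj hM, if_neg (by rintro ⟨h, -⟩; omega)]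
    · have hlt : j < m := by omega
      rw [Finset.sum_eq_sum_Ico_succ_bot (by omega : j < m + 1),
        Finset.sum_eq_sum_Ico_succ_bot (by omega : j + 1 < m + 1),
        Finset.sum_eq_sum_Ico_succ_bot hlt]
      rw [L3 hj hM, L4 hlt hM hd]
      have hre : ∑ p ∈ Finset.Ico (j+2) (m+1), vind (m+1) (wins j M w) p =
          ∑ q ∈ Finset.Ico (j+1) m, vind m w q := by
        rw [Finset.sum_Ico_eq_sum_range, Finset.sum_Ico_eq_sum_range]
        have hc : m + 1 - (j + 2) = m - (j + 1) := by omega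
        rw [hc]
        apply Finset.sum_congr rfl
        intro i hi
        simp only [Finset.mem_range] at hi
        have : j + 2 + i = (j + 1 + i) + 1 := by omega
        rw [this, L5 (by omega) (by omega)]
      rw [hre]
      omega
  rw [hleft, hright]
  omega

end

/-- number of "bad" gaps -/
def bcount (m : ℕ) (w : ℕ → ℕ) : ℕ :=
  ((Finset.range (m+1)).filter (fun j => badA m j w ∨ badD m j w)).card

lemma bcount_eq_sum (m : ℕ) (w : ℕ → ℕ) :
    bcount m w = ∑ j ∈ Finset.range (m+1), if badA m j w ∨ badD m j w then 1 else 0 :=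
  Finset.card_filter _ _

lemma bad_stable {m j : ℕ} {w : ℕ → ℕ} (hjm : j + 2 ≤ m) :
    ((badA (m+1) j w ∨ badD (m+1) j w) ↔ (badA m j w ∨ badD m j w)) := by
  unfold badA badD
  constructor
  · rintro (⟨a, b, c⟩ | ⟨a, b, c | c⟩)
    · exact Or.inl ⟨by omega, b, c⟩
    · omega
    · exact Or.inr ⟨a, b, Or.inr c⟩
  · rintro (⟨a, b, c⟩ | ⟨a, b, c | c⟩)
    · exact Or.inl ⟨by omega, b, c⟩
    · omega
    · exact Or.inr ⟨a, b, Or.inr c⟩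

lemma vind_stable {m p : ℕ} {w : ℕ → ℕ} (hp : p + 2 ≤ m) :
    vind (m+1) w p = vind m w p := by
  unfold vind
  congr 1
  simp only [eq_iff_iff]
  constructor <;> rintro ⟨a, b, c⟩ <;> exact ⟨a, by omega, c⟩

lemma sum_peel3 (f : ℕ → ℕ) (k : ℕ) :
    ∑ j ∈ Finset.range (k+3+1), f j
      = ∑ j ∈ Finset.range (k+1), f j + f (k+1) + f (k+2) + f (k+3) := by
  rw [Finset.sum_range_succ, Finset.sum_range_succ, Finset.sum_range_succ]

lemma sum_peel2 (f : ℕ → ℕ) (k : ℕ) :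
    ∑ j ∈ Finset.range (k+2+1), f j
      = ∑ j ∈ Finset.range (k+1), f j + f (k+1) + f (k+2) := by
  rw [Finset.sum_range_succ, Finset.sum_range_succ]

lemma wvc_succ (k : ℕ) (w : ℕ → ℕ) :
    wvc (k+3) w = wvc (k+2) w + vind (k+3) w (k+1) := by
  have h1 : vind (k+3) w (k+2) = 0 := by
    unfold vind; rw [if_neg]; rintro ⟨-, h, -⟩; omega
  have h2 : vind (k+2) w (k+1) = 0 := by
    unfold vind; rw [if_neg]; rintro ⟨-, h, -⟩; omega
  have hc : ∑ p ∈ Finset.range (k+1), vind (k+3) w p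
      = ∑ p ∈ Finset.range (k+1), vind (k+2) w p :=
    Finset.sum_congr rfl (fun p hp => by
      simp only [Finset.mem_range] at hp
      exact vind_stable (by omega : p + 2 ≤ k + 2))
  have L : ∑ p ∈ Finset.range (k+3), vind (k+3) w p
      = ∑ p ∈ Finset.range (k+1), vind (k+3) w p + vind (k+3) w (k+1)
        + vind (k+3) w (k+2) := by
    rw [Finset.sum_range_succ, Finset.sum_range_succ]
  have R : ∑ p ∈ Finset.range (k+2), vind (k+2) w p
      = ∑ p ∈ Finset.range (k+1), vind (k+2) w p + vind (k+2) w (k+1) :=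
    Finset.sum_range_succ _ _
  rw [wvc_eq_sum, wvc_eq_sum, L, R, hc, h1, h2]
  omega

/-- Key lemma B: the number of bad gaps is `m - 1 - 2·(valley count)`. -/
lemma bcount_wvc (m : ℕ) (hm : 1 ≤ m) (w : ℕ → ℕ)
    (hd : ∀ i, i + 1 < m → w i ≠ w (i+1)) :
    bcount m w + 2 * wvc m w + 2 = m + 1 := by
  induction m with
  | zero => omega
  | succ m ih =>
    rcases Nat.lt_or_ge m 2 with hm2 | hm2
    · -- m+1 = 1 or 2 : base cases
      interval_cases m
      · -- total length 1
        have h1 : wvc 1 w = 0 := by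
          unfold wvc
          simp
        have h2 : bcount 1 w = 0 := by
          unfold bcount
          rw [Finset.card_eq_zero, Finset.filter_eq_empty_iff]
          intro j hj
          simp only [Finset.mem_range] at hj
          rintro (⟨a, -⟩ | ⟨a, -⟩) <;> omega
        rw [h1, h2]
      · -- total length 2
        have h1 : wvc 2 w = 0 := by
          have he : Finset.Ioo 0 (2-1) = (∅ : Finset ℕ) := by decide
          unfold wvc
          rw [he, Finset.filter_empty, Finset.card_empty]
        have hne : w 0 ≠ w 1 := hd 0 (by omega)
        have h2 : bcount 2 w = 1 := by
          rw [bcount_eq_sum]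
          have e3 : Finset.range 3 = {0, 1, 2} := by decide
          rw [e3]
          rw [Finset.sum_insert (by decide), Finset.sum_insert (by decide),
            Finset.sum_singleton]
          unfold badA badD
          norm_num
          split_ifs <;> omega
        rw [h1, h2]
    · -- inductive step, m ≥ 2
      obtain ⟨k, rfl⟩ : ∃ k, m = k + 2 := ⟨m - 2, by omega⟩
      have hdm : ∀ i, i + 1 < k + 2 → w i ≠ w (i+1) := fun i hi => hd i (by omega)
      have IH := ih (by omega) hdm
      have hb : bcount (k+3) w + 2 * vind (k+3) w (k+1) = bcount (k+2) w + 1 := by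
        rw [bcount_eq_sum, bcount_eq_sum, sum_peel3 _ k, sum_peel2 _ k]
        rw [Finset.sum_congr rfl (fun j hj => by
          simp only [Finset.mem_range] at hj
          rw [if_congr (bad_stable (by omega : j + 2 ≤ k + 2)) rfl rfl])]
        have hne1 : w k ≠ w (k+1) := hd k (by omega)
        have hne2 : w (k+1) ≠ w (k+2) := fun h => hd (k+1) (by omega) h
        rcases hne1.lt_or_gt with hu | hu <;> rcases hne2.lt_or_gt with ht | ht
        · -- ascent, ascent
          have hB1 : (if badA (k+3) (k+1) w ∨ badD (k+3) (k+1) w then 1 else 0) = 1 :=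
            if_pos (Or.inl ⟨by omega, ht, Or.inr hu⟩)
          have hB2 : (if badA (k+3) (k+2) w ∨ badD (k+3) (k+2) w then 1 else 0) = 0 := by
            rw [if_neg]
            rintro (⟨h1, -⟩ | ⟨-, h2, -⟩)
            · omega
            · exact absurd (show w (k+1) < w k from h2) (by omega)
          have hB3 : (if badA (k+3) (k+3) w ∨ badD (k+3) (k+3) w then 1 else 0) = 0 := by
            rw [if_neg]
            rintro (⟨h1, -⟩ | ⟨-, h2, -⟩)
            · omega
            · exact absurd (show w (k+2) < w (k+1) from h2) (by omega)
          have hO1 : (if badA (k+2) (k+1) w ∨ badD (k+2) (k+1) w then 1 else 0) = 0 := by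
            rw [if_neg]
            rintro (⟨h1, -⟩ | ⟨-, -, h3 | h3⟩)
            · omega
            · omega
            · exact absurd (show w (k+1) < w k from h3) (by omega)
          have hO2 : (if badA (k+2) (k+2) w ∨ badD (k+2) (k+2) w then 1 else 0) = 0 := by
            rw [if_neg]
            rintro (⟨h1, -⟩ | ⟨-, h2, -⟩)
            · omega
            · exact absurd (show w (k+1) < w k from h2) (by omega)
          have hV : vind (k+3) w (k+1) = 0 := by
            unfold vind
            rw [if_neg]
            rintro ⟨-, -, h, -⟩
            exact absurd (show w (k+1) < w k from h) (by omega)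
          rw [hB1, hB2, hB3, hO1, hO2, hV]
        · -- ascent then descent
          have hB1 : (if badA (k+3) (k+1) w ∨ badD (k+3) (k+1) w then 1 else 0) = 0 := by
            rw [if_neg]
            rintro (⟨-, h2, -⟩ | ⟨-, -, h3 | h3⟩)
            · exact absurd (show w (k+1) < w (k+2) from h2) (by omega)
            · omega
            · exact absurd (show w (k+1) < w k from h3) (by omega)
          have hB2 : (if badA (k+3) (k+2) w ∨ badD (k+3) (k+2) w then 1 else 0) = 0 := by
            rw [if_neg]
            rintro (⟨h1, -⟩ | ⟨-, h2, -⟩)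
            · omega
            · exact absurd (show w (k+1) < w k from h2) (by omega)
          have hB3 : (if badA (k+3) (k+3) w ∨ badD (k+3) (k+3) w then 1 else 0) = 1 :=
            if_pos (Or.inr ⟨by omega, ht, Or.inl rfl⟩)
          have hO1 : (if badA (k+2) (k+1) w ∨ badD (k+2) (k+1) w then 1 else 0) = 0 := by
            rw [if_neg]
            rintro (⟨h1, -⟩ | ⟨-, -, h3 | h3⟩)
            · omega
            · omega
            · exact absurd (show w (k+1) < w k from h3) (by omega)
          have hO2 : (if badA (k+2) (k+2) w ∨ badD (k+2) (k+2) w then 1 else 0) = 0 := by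
            rw [if_neg]
            rintro (⟨h1, -⟩ | ⟨-, h2, -⟩)
            · omega
            · exact absurd (show w (k+1) < w k from h2) (by omega)
          have hV : vind (k+3) w (k+1) = 0 := by
            unfold vind
            rw [if_neg]
            rintro ⟨-, -, h, -⟩
            exact absurd (show w (k+1) < w k from h) (by omega)
          rw [hB1, hB2, hB3, hO1, hO2, hV]
        · -- descent then ascent
          have hB2 : (if badA (k+3) (k+2) w ∨ badD (k+3) (k+2) w then 1 else 0) = 0 := by
            rw [if_neg]
            rintro (⟨h1, -⟩ | ⟨-, -, h3 | h3⟩)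
            · omega
            · omega
            · exact absurd (show w (k+2) < w (k+1) from h3) (by omega)
          have hB3 : (if badA (k+3) (k+3) w ∨ badD (k+3) (k+3) w then 1 else 0) = 0 := by
            rw [if_neg]
            rintro (⟨h1, -⟩ | ⟨-, h2, -⟩)
            · omega
            · exact absurd (show w (k+2) < w (k+1) from h2) (by omega)
          have hO2 : (if badA (k+2) (k+2) w ∨ badD (k+2) (k+2) w then 1 else 0) = 1 :=
            if_pos (Or.inr ⟨by omega, hu, Or.inl rfl⟩)
          have hV : vind (k+3) w (k+1) = 1 := by
            unfold vind
            exact if_pos ⟨by omega, by omega, hu, ht⟩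
          by_cases hq : 2 ≤ k + 1 ∧ w k < w (k-1)
          · have hB1 : (if badA (k+3) (k+1) w ∨ badD (k+3) (k+1) w then 1 else 0) = 1 :=
              if_pos (Or.inr ⟨hq.1, hq.2, Or.inr hu⟩)
            have hO1 : (if badA (k+2) (k+1) w ∨ badD (k+2) (k+1) w then 1 else 0) = 1 :=
              if_pos (Or.inr ⟨hq.1, hq.2, Or.inr hu⟩)
            rw [hB1, hB2, hB3, hO1, hO2, hV]
          · have hB1 : (if badA (k+3) (k+1) w ∨ badD (k+3) (k+1) w then 1 else 0) = 0 := by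
              rw [if_neg]
              rintro (⟨-, -, h3 | h3⟩ | ⟨a, b, -⟩)
              · omega
              · exact absurd (show w k < w (k+1) from h3) (by omega)
              · exact hq ⟨a, b⟩
            have hO1 : (if badA (k+2) (k+1) w ∨ badD (k+2) (k+1) w then 1 else 0) = 0 := by
              rw [if_neg]
              rintro (⟨h1, -⟩ | ⟨a, b, -⟩)
              · omega
              · exact hq ⟨a, b⟩
            rw [hB1, hB2, hB3, hO1, hO2, hV]
        · -- descent, descent
          have hB2 : (if badA (k+3) (k+2) w ∨ badD (k+3) (k+2) w then 1 else 0) = 1 :=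
            if_pos (Or.inr ⟨by omega, hu, Or.inr ht⟩)
          have hB3 : (if badA (k+3) (k+3) w ∨ badD (k+3) (k+3) w then 1 else 0) = 1 :=
            if_pos (Or.inr ⟨by omega, ht, Or.inl rfl⟩)
          have hO2 : (if badA (k+2) (k+2) w ∨ badD (k+2) (k+2) w then 1 else 0) = 1 :=
            if_pos (Or.inr ⟨by omega, hu, Or.inl rfl⟩)
          have hV : vind (k+3) w (k+1) = 0 := by
            unfold vind
            rw [if_neg]
            rintro ⟨-, -, -, h⟩
            exact absurd (show w (k+1) < w (k+2) from h) (by omega)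
          by_cases hq : 2 ≤ k + 1 ∧ w k < w (k-1)
          · have hB1 : (if badA (k+3) (k+1) w ∨ badD (k+3) (k+1) w then 1 else 0) = 1 :=
              if_pos (Or.inr ⟨hq.1, hq.2, Or.inr hu⟩)
            have hO1 : (if badA (k+2) (k+1) w ∨ badD (k+2) (k+1) w then 1 else 0) = 1 :=
              if_pos (Or.inr ⟨hq.1, hq.2, Or.inr hu⟩)
            rw [hB1, hB2, hB3, hO1, hO2, hV]
          · have hB1 : (if badA (k+3) (k+1) w ∨ badD (k+3) (k+1) w then 1 else 0) = 0 := by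
              rw [if_neg]
              rintro (⟨-, h2, -⟩ | ⟨a, b, -⟩)
              · exact absurd (show w (k+1) < w (k+2) from h2) (by omega)
              · exact hq ⟨a, b⟩
            have hO1 : (if badA (k+2) (k+1) w ∨ badD (k+2) (k+1) w then 1 else 0) = 0 := by
              rw [if_neg]
              rintro (⟨h1, -⟩ | ⟨a, b, -⟩)
              · omega
              · exact hq ⟨a, b⟩
            rw [hB1, hB2, hB3, hO1, hO2, hV]
      show bcount (k+3) w + 2 * wvc (k+3) w + 2 = k+3+1
      rw [wvc_succ]
      omega


/-! ### Permutation side -/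

lemma valleyCount_eq_wvc {n : ℕ} (π : Equiv.Perm (Fin n)) :
    valleyCount π = wvc n (permWord π) := rfl

/-- insert the new maximum at position `j` -/
def ins (m : ℕ) (j : Fin (m+1)) (σ : Equiv.Perm (Fin m)) : Equiv.Perm (Fin (m+1)) :=
  ((finSuccEquiv' j).trans (Equiv.optionCongr σ)).trans (finSuccEquiv' (Fin.last m)).symm

lemma ins_apply_succAbove {m : ℕ} (j : Fin (m+1)) (σ : Equiv.Perm (Fin m)) (x : Fin m) :
    ins m j σ (j.succAbove x) = Fin.castSucc (σ x) := by
  simp [ins, finSuccEquiv'_succAbove, finSuccEquiv'_symm_some, Fin.succAbove_last]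

lemma ins_apply_self {m : ℕ} (j : Fin (m+1)) (σ : Equiv.Perm (Fin m)) :
    ins m j σ j = Fin.last m := by
  simp [ins, finSuccEquiv'_at, finSuccEquiv'_symm_none]

lemma permWord_ins {m : ℕ} (j : Fin (m+1)) (σ : Equiv.Perm (Fin m)) :
    permWord (ins m j σ) = wins j.val m (permWord σ) := by
  funext i
  by_cases him : i < m + 1
  · rcases Nat.lt_trichotomy i j.val with hij | hij | hij
    · -- i < j
      have him' : i < m := by have := j.isLt; omega
      rw [wins_lt hij]
      unfold permWord
      rw [dif_pos him, dif_pos him']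
      have hsa : j.succAbove ⟨i, him'⟩ = ⟨i, him⟩ := by
        rw [Fin.succAbove_of_castSucc_lt]
        · rfl
        · rw [Fin.lt_def]; exact hij
      rw [← hsa, ins_apply_succAbove]
      rfl
    · -- i = j
      have hj : (⟨i, him⟩ : Fin (m+1)) = j := Fin.ext hij
      unfold permWord wins
      rw [dif_pos him, hj, ins_apply_self, if_neg (by omega), if_pos hij]
      exact Fin.val_last m
    · -- i > j
      have him' : i - 1 < m := by omega
      rw [wins_gt hij]
      unfold permWord
      rw [dif_pos him, dif_pos him']
      have hsa : j.succAbove ⟨i - 1, him'⟩ = ⟨i, him⟩ := by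
        rw [Fin.succAbove_of_le_castSucc]
        · apply Fin.ext; simp [Fin.val_succ]; omega
        · rw [Fin.le_def]; simp; omega
      rw [← hsa, ins_apply_succAbove]
      rfl
  · -- out of range
    rw [wins_gt (by have := j.isLt; omega)]
    unfold permWord
    rw [dif_neg him, dif_neg (by omega : ¬ (i - 1 < m))]

lemma ins_injective (m : ℕ) :
    Function.Injective (fun x : Equiv.Perm (Fin m) × Fin (m+1) => ins m x.2 x.1) := by
  rintro ⟨σ, j⟩ ⟨σ', j'⟩ h
  simp only at h
  have hj : j = j' := by
    have h1 : ins m j' σ' j = Fin.last m := by rw [← h]; exact ins_apply_self j σ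
    have h2 : ins m j' σ' j' = Fin.last m := ins_apply_self j' σ'
    exact (ins m j' σ').injective (h1.trans h2.symm)
  subst hj
  have hσ : σ = σ' := by
    apply Equiv.ext
    intro x
    have h1 := DFunLike.congr_fun h (j.succAbove x)
    rw [ins_apply_succAbove, ins_apply_succAbove] at h1
    exact Fin.castSucc_injective m h1
  rw [hσ]

lemma ins_bijective (m : ℕ) :
    Function.Bijective (fun x : Equiv.Perm (Fin m) × Fin (m+1) => ins m x.2 x.1) := by
  rw [Fintype.bijective_iff_injective_and_card]
  refine ⟨ins_injective m, ?_⟩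
  simp [Fintype.card_perm, Nat.factorial_succ, Nat.mul_comm]

lemma P_eq_sum (m k : ℕ) :
    P (m+1) k = ∑ σ : Equiv.Perm (Fin m),
      (Finset.univ.filter (fun j : Fin (m+1) => valleyCount (ins m j σ) = k)).card := by
  rw [P, Nat.card_eq_fintype_card]
  have e1 := (Equiv.ofBijective _ (ins_bijective m)).subtypeEquiv
    (p := fun x : Equiv.Perm (Fin m) × Fin (m+1) => valleyCount (ins m x.2 x.1) = k)
    (q := fun π => valleyCount π = k) (fun x => Iff.rfl)
  rw [← Fintype.card_congr e1]
  rw [Fintype.card_congr (Equiv.subtypeProdEquivSigmaSubtype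
    (fun (σ : Equiv.Perm (Fin m)) (j : Fin (m+1)) => valleyCount (ins m j σ) = k))]
  rw [Fintype.card_sigma]
  exact Finset.sum_congr rfl fun σ _ => Fintype.card_subtype _

lemma card_filter_fin (m : ℕ) (p : ℕ → Prop) [DecidablePred p] :
    (Finset.univ.filter (fun j : Fin (m+1) => p j.val)).card
      = ((Finset.range (m+1)).filter p).card := by
  rw [Finset.card_filter, Finset.card_filter,
    Fin.sum_univ_eq_sum_range (fun i => if p i then 1 else 0)]

lemma inner_card (m k : ℕ) (σ : Equiv.Perm (Fin m)) :
    (Finset.univ.filter (fun j : Fin (m+1) => valleyCount (ins m j σ) = k)).card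
      = if valleyCount σ = k then m + 1 - bcount m (permWord σ)
        else if valleyCount σ + 1 = k then bcount m (permWord σ) else 0 := by
  set w := permWord σ with hw
  have hM : ∀ i, i < m → w i < m := by
    intro i hi
    rw [hw]
    unfold permWord
    rw [dif_pos hi]
    exact (σ ⟨i, hi⟩).isLt
  have hd : ∀ i, i + 1 < m → w i ≠ w (i+1) := by
    intro i hi
    rw [hw]
    unfold permWord
    rw [dif_pos (by omega : i < m), dif_pos hi]
    intro heq
    have h2 := σ.injective (Fin.ext heq)
    have h3 : i = i + 1 := congrArg Fin.val h2
    omega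
  have hvc : ∀ j : Fin (m+1), valleyCount (ins m j σ) =
      valleyCount σ + ((if badA m j.val w then 1 else 0) + (if badD m j.val w then 1 else 0)) := by
    intro j
    rw [valleyCount_eq_wvc, valleyCount_eq_wvc, permWord_ins, ← hw]
    exact ins_vc (by have := j.isLt; omega) hM hd
  have hdisj : ∀ i, ¬ (badA m i w ∧ badD m i w) := by
    rintro i ⟨⟨a1, a2, a3 | a3⟩, ⟨d1, d2, d3 | d3⟩⟩ <;> omega
  by_cases h1 : valleyCount σ = k
  · rw [if_pos h1]
    have hfc : Finset.univ.filter (fun j : Fin (m+1) => valleyCount (ins m j σ) = k)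
        = Finset.univ.filter (fun j : Fin (m+1) => ¬ (badA m j.val w ∨ badD m j.val w)) := by
      apply Finset.filter_congr
      intro j _
      rw [hvc j]
      by_cases hA : badA m j.val w <;> by_cases hD : badD m j.val w <;>
        simp [hA, hD] <;> omega
    rw [hfc, card_filter_fin m (fun i => ¬ (badA m i w ∨ badD m i w))]
    have hsplit := Finset.card_filter_add_card_filter_not
      (s := Finset.range (m+1)) (p := fun i => badA m i w ∨ badD m i w)
    have hbc : bcount m w = ((Finset.range (m+1)).filter
        (fun i => badA m i w ∨ badD m i w)).card := rfl
    have hcr : (Finset.range (m+1)).card = m + 1 := Finset.card_range _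
    omega
  · rw [if_neg h1]
    by_cases h2 : valleyCount σ + 1 = k
    · rw [if_pos h2]
      have hfc : Finset.univ.filter (fun j : Fin (m+1) => valleyCount (ins m j σ) = k)
          = Finset.univ.filter (fun j : Fin (m+1) => badA m j.val w ∨ badD m j.val w) := by
        apply Finset.filter_congr
        intro j _
        rw [hvc j]
        by_cases hA : badA m j.val w
        · by_cases hD : badD m j.val w
          · exact absurd ⟨hA, hD⟩ (hdisj j.val)
          · simp [hA, hD] <;> omega
        · by_cases hD : badD m j.val w <;> simp [hA, hD] <;> omega
      rw [hfc, card_filter_fin m (fun i => badA m i w ∨ badD m i w)]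
      rfl
    · rw [if_neg h2, Finset.card_eq_zero, Finset.filter_eq_empty_iff]
      intro j _
      rw [hvc j]
      by_cases hA : badA m j.val w
      · by_cases hD : badD m j.val w
        · exact absurd ⟨hA, hD⟩ (hdisj j.val)
        · simp [hA, hD] <;> omega
      · by_cases hD : badD m j.val w <;> simp [hA, hD] <;> omega

lemma permWord_adj_ne {m : ℕ} (σ : Equiv.Perm (Fin m)) :
    ∀ i, i + 1 < m → permWord σ i ≠ permWord σ (i+1) := by
  intro i hi
  unfold permWord
  rw [dif_pos (by omega : i < m), dif_pos hi]
  intro heq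
  have h2 := σ.injective (Fin.ext heq)
  have h3 : i = i + 1 := congrArg Fin.val h2
  omega

lemma sum_ind_eq_P (m k : ℕ) :
    ∑ σ : Equiv.Perm (Fin m), (if valleyCount σ = k then 1 else 0) = P m k := by
  rw [P, Nat.card_eq_fintype_card, Fintype.card_subtype, Finset.card_filter]

lemma P_succ_one (m : ℕ) (hm : 1 ≤ m) :
    P (m+1) 1 = 4 * P m 1 + (m - 1) * P m 0 := by
  rw [P_eq_sum]
  have h : ∀ σ : Equiv.Perm (Fin m),
      (Finset.univ.filter (fun j : Fin (m+1) => valleyCount (ins m j σ) = 1)).card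
        = 4 * (if valleyCount σ = 1 then 1 else 0)
          + (m - 1) * (if valleyCount σ = 0 then 1 else 0) := by
    intro σ
    rw [inner_card]
    have hbw := bcount_wvc m hm (permWord σ) (permWord_adj_ne σ)
    have hveq : valleyCount σ = wvc m (permWord σ) := rfl
    by_cases h1 : valleyCount σ = 1
    · rw [if_pos h1, if_pos h1, if_neg (by omega)]
      omega
    · rw [if_neg h1, if_neg h1]
      by_cases h0 : valleyCount σ = 0
      · rw [if_pos (by omega : valleyCount σ + 1 = 1), if_pos h0]
        omega
      · rw [if_neg (by omega : ¬ (valleyCount σ + 1 = 1)), if_neg h0]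
        omega
  rw [Finset.sum_congr rfl (fun σ _ => h σ), Finset.sum_add_distrib,
    ← Finset.mul_sum, ← Finset.mul_sum, sum_ind_eq_P, sum_ind_eq_P]

lemma P_succ_zero (m : ℕ) (hm : 1 ≤ m) :
    P (m+1) 0 = 2 * P m 0 := by
  rw [P_eq_sum]
  have h : ∀ σ : Equiv.Perm (Fin m),
      (Finset.univ.filter (fun j : Fin (m+1) => valleyCount (ins m j σ) = 0)).card
        = 2 * (if valleyCount σ = 0 then 1 else 0) := by
    intro σ
    rw [inner_card]
    have hbw := bcount_wvc m hm (permWord σ) (permWord_adj_ne σ)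
    have hveq : valleyCount σ = wvc m (permWord σ) := rfl
    by_cases h0 : valleyCount σ = 0
    · rw [if_pos h0, if_pos h0]
      omega
    · rw [if_neg h0, if_neg (by omega : ¬ (valleyCount σ + 1 = 0)), if_neg h0]
  rw [Finset.sum_congr rfl (fun σ _ => h σ), ← Finset.mul_sum, sum_ind_eq_P]

lemma P_one_zero : P 1 0 = 1 := by
  rw [P, Nat.card_eq_fintype_card]
  decide

lemma P_zero_pow (m : ℕ) (hm : 1 ≤ m) : P m 0 = 2 ^ (m - 1) := by
  induction m, hm using Nat.le_induction with
  | base => exact P_one_zero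
  | succ m hm ih =>
    rw [P_succ_zero m hm, ih, ← pow_succ']
    congr 1
    omega

theorem main (n : ℕ) (hn : 3 ≤ n) :
    P n 1 = 4 * P (n - 1) 1 + (n - 2) * 2 ^ (n - 2) := by
  obtain ⟨m, rfl⟩ : ∃ m, n = m + 1 := ⟨n - 1, by omega⟩
  have h1 : m + 1 - 1 = m := rfl
  have h2 : m + 1 - 2 = m - 1 := by omega
  rw [P_succ_one m (by omega), h1, h2, P_zero_pow m (by omega)]

end OV

/-- `P(n,1) = 4·P(n-1,1) + (n-2)·2^(n-2)` for all `n ≥ 3`. -/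
theorem one_valley_recurrence (n : ℕ) (hn : 3 ≤ n) :
    P n 1 = 4 * P (n - 1) 1 + (n - 2) * 2 ^ (n - 2) := OV.main n hn
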